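/- Let q, l ≥ 1 and let x₀,…,x_{q−1} ∈ {0,1} with x = ∑_{i=0}^{q−1} x_i·2^{i}. Then incr(x,q,l) = ∑_{i=0}^{q−1} x_i·2^{i·l}. -/

import Mathlib

lemma geom2 (b n : ℕ) : (2^b - 1) * (∑ j ∈ Finset.range n, 2^(j*b)) = 2^(n*b) - 1 := by
  induction n with
  | zero => simp
  | succ n ih =>
    rw [Finset.sum_range_succ, Nat.mul_add, ih]
    have h1 : 1 ≤ 2^(n*b) := Nat.one_le_two_pow
    have h3 : 2^((n+1)*b) = 2^b * 2^(n*b) := by rw [add_mul, one_mul, pow_add, mul_comm]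
    have h4 : (2^b - 1) * 2^(n*b) = 2^b * 2^(n*b) - 2^(n*b) := by
      rw [Nat.sub_mul, one_mul]
    have h5 : 2^(n*b) ≤ 2^b * 2^(n*b) := Nat.le_mul_of_pos_left _ (Nat.pos_of_ne_zero (by positivity))
    omega

lemma geom_div (b n : ℕ) (hb : 1 ≤ b) :
    (2^(n*b) - 1) / (2^b - 1) = ∑ j ∈ Finset.range n, 2^(j*b) := by
  have hpos : 0 < 2^b - 1 := by
    have : 2^1 ≤ 2^b := Nat.pow_le_pow_right (by norm_num) hb
    omega
  rw [← geom2 b n, Nat.mul_div_cancel_left _ hpos]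

lemma rep_eq (x n c : ℕ) (hc : 1 ≤ c) :
    x * ((2 ^ (n * c) - 1) / (2 ^ c - 1)) = x * ∑ j ∈ Finset.range n, 2^(j*c) := by
  rw [geom_div c n hc]

lemma blocks_lt (c n : ℕ) (d : ℕ → ℕ) (hd : ∀ j < n, d j < 2^c) :
    (∑ j ∈ Finset.range n, d j * 2^(j*c)) < 2^(n*c) := by
  induction n with
  | zero => simp
  | succ n ih =>
    rw [Finset.sum_range_succ]
    have h1 := ih (fun j hj => hd j (by omega))
    have h2 : d n + 1 ≤ 2^c := hd n (by omega)
    have h3 : 2^((n+1)*c) = 2^c * 2^(n*c) := by rw [add_mul, one_mul, pow_add, mul_comm]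
    calc (∑ j ∈ Finset.range n, d j * 2^(j*c)) + d n * 2^(n*c)
        < 2^(n*c) + d n * 2^(n*c) := by omega
      _ = (d n + 1) * 2^(n*c) := by ring
      _ ≤ 2^c * 2^(n*c) := Nat.mul_le_mul_right _ h2
      _ = 2^((n+1)*c) := h3.symm

lemma blocks_div (c n : ℕ) (d : ℕ → ℕ) (hd : ∀ j < n, d j < 2^c) (j : ℕ) (hj : j < n) :
    (∑ j' ∈ Finset.range n, d j' * 2^(j'*c)) / 2^(j*c) % 2^c = d j := by
  have hsplit : ∑ j' ∈ Finset.range n, d j' * 2^(j'*c)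
      = (∑ j' ∈ Finset.range j, d j' * 2^(j'*c)) + d j * 2^(j*c)
        + ∑ j' ∈ Finset.Ico (j+1) n, d j' * 2^(j'*c) := by
    rw [← Finset.sum_range_add_sum_Ico _ (show j+1 ≤ n by omega), Finset.sum_range_succ]
  have hdvd : 2^((j+1)*c) ∣ ∑ j' ∈ Finset.Ico (j+1) n, d j' * 2^(j'*c) := by
    refine Finset.dvd_sum fun i hi => ?_
    have : (j+1)*c ≤ i*c := Nat.mul_le_mul_right _ (Finset.mem_Ico.mp hi).1
    exact Dvd.dvd.mul_left (pow_dvd_pow 2 this) _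
  obtain ⟨H, hH⟩ := hdvd
  have hlow : (∑ j' ∈ Finset.range j, d j' * 2^(j'*c)) < 2^(j*c) :=
    blocks_lt c j d (fun i hi => hd i (by omega))
  rw [hsplit, hH]
  have he : (∑ j' ∈ Finset.range j, d j' * 2^(j'*c)) + d j * 2^(j*c) + 2^((j+1)*c) * H
      = (∑ j' ∈ Finset.range j, d j' * 2^(j'*c)) + 2^(j*c) * (d j + 2^c * H) := by
    rw [add_mul, one_mul, pow_add]; ring
  rw [he, Nat.add_mul_div_left _ _ (by positivity), Nat.div_eq_of_lt hlow, zero_add,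
    Nat.add_mul_mod_self_left, Nat.mod_eq_of_lt (hd j hj)]

lemma blocks_testBit (c n : ℕ) (d : ℕ → ℕ) (hd : ∀ j < n, d j < 2^c) (j r : ℕ)
    (hj : j < n) (hr : r < c) :
    (∑ j' ∈ Finset.range n, d j' * 2^(j'*c)).testBit (j*c + r) = (d j).testBit r := by
  have h := blocks_div c n d hd j hj
  set N := ∑ j' ∈ Finset.range n, d j' * 2^(j'*c) with hN
  rw [Nat.testBit_eq_decide_div_mod_eq, Nat.testBit_eq_decide_div_mod_eq]
  have h1 : N / 2^(j*c+r) = (N / 2^(j*c)) / 2^r := by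
    rw [Nat.div_div_eq_div_mul, ← pow_add]
  have h2 : N / 2^(j*c) = 2^c * (N / 2^(j*c) / 2^c) + d j := by
    conv_lhs => rw [← Nat.div_add_mod (N / 2^(j*c)) (2^c)]
    rw [h]
  have h3 : (2^c * (N / 2^(j*c) / 2^c) + d j) / 2^r
      = d j / 2^r + 2^(c-r) * (N / 2^(j*c) / 2^c) := by
    have hcc : (2:ℕ)^c = 2^(c-r) * 2^r := by rw [← pow_add]; congr 1; omega
    rw [add_comm, show 2^c * (N / 2^(j*c) / 2^c) = 2^r * (2^(c-r) * (N / 2^(j*c) / 2^c)) from by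
      rw [hcc]; ring, Nat.add_mul_div_left _ _ (by positivity : (0:ℕ) < 2^r)]
  have h4 : 2 ∣ 2^(c-r) * (N / 2^(j*c) / 2^c) :=
    Dvd.dvd.mul_right (dvd_pow_self 2 (by omega)) _
  obtain ⟨w, hw⟩ := h4
  rw [h1, h2, h3, hw, Nat.add_mul_mod_self_left]

lemma and_mask (q p : ℕ) (xs : ℕ → ℕ) (hq : 1 ≤ q) (hxs : ∀ i < q, xs i ≤ 1)
    (hp : q + 1 ≤ p) :
    ((∑ i ∈ Finset.range q, xs i * 2^i) * ∑ j ∈ Finset.range q, 2^(j*(p-1)))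
      &&& (∑ j ∈ Finset.range q, 2^(j*p))
    = ∑ j ∈ Finset.range q, xs j * 2^(j*p) := by
  set c := p - 1 with hc
  have hpc : p = c + 1 := by omega
  have hqc : q ≤ c := by omega
  set x := ∑ i ∈ Finset.range q, xs i * 2^i with hxdef
  have hx1 : x = ∑ i ∈ Finset.range q, xs i * 2^(i*1) := by simp [hxdef]
  have hxlt : x < 2^q := by
    rw [hxdef]
    have := blocks_lt 1 q xs (fun j hj => by have := hxs j hj; omega)
    simpa using this
  have hxc : x < 2^c := lt_of_lt_of_le hxlt (Nat.pow_le_pow_right (by norm_num) hqc)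
  -- A as blocks of size c
  have hA : x * ∑ j ∈ Finset.range q, 2^(j*c) = ∑ j ∈ Finset.range q, x * 2^(j*c) :=
    Finset.mul_sum _ _ _
  have hM : (∑ j ∈ Finset.range q, 2^(j*p)) = ∑ j ∈ Finset.range q, 1 * 2^(j*p) := by simp
  apply Nat.eq_of_testBit_eq
  intro i
  rw [Nat.testBit_land]
  by_cases hbig : q * p ≤ i
  · have hS : (∑ j ∈ Finset.range q, xs j * 2^(j*p)).testBit i = false := by
      apply Nat.testBit_lt_two_pow
      calc (∑ j ∈ Finset.range q, xs j * 2^(j*p)) < 2^(q*p) :=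
            blocks_lt p q xs (fun j hj => lt_of_le_of_lt (hxs j hj) (by
              have : (1:ℕ) < 2^p := by
                have : (2:ℕ)^1 ≤ 2^p := Nat.pow_le_pow_right (by norm_num) (by omega)
                omega
              omega))
        _ ≤ 2^i := Nat.pow_le_pow_right (by norm_num) hbig
    have hMb : (∑ j ∈ Finset.range q, 2^(j*p)).testBit i = false := by
      apply Nat.testBit_lt_two_pow
      calc (∑ j ∈ Finset.range q, 2^(j*p)) = ∑ j ∈ Finset.range q, 1 * 2^(j*p) := hM
        _ < 2^(q*p) := blocks_lt p q (fun _ => 1) (fun j hj => by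
              show (1:ℕ) < 2^p
              have : (2:ℕ)^1 ≤ 2^p := Nat.pow_le_pow_right (by norm_num) (by omega)
              omega)
        _ ≤ 2^i := Nat.pow_le_pow_right (by norm_num) hbig
    rw [hS, hMb, Bool.and_false]
  · push_neg at hbig
    obtain ⟨j, r, hrp, hjq, hip⟩ : ∃ j r, r < p ∧ j < q ∧ i = j * p + r := by
      refine ⟨i/p, i%p, Nat.mod_lt _ (by omega), ?_, by rw [mul_comm]; exact (Nat.div_add_mod i p).symm⟩
      rcases Nat.lt_or_ge (i/p) q with h | h
      · exact h
      · exfalso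
        have h1 : q * p ≤ (i/p) * p := Nat.mul_le_mul_right _ h
        have h2 : (i/p) * p ≤ i := Nat.div_mul_le_self i p
        omega
    subst hip
    have hMb : (∑ j' ∈ Finset.range q, 2^(j'*p)).testBit (j*p+r) = (1:ℕ).testBit r := by
      rw [hM]
      exact blocks_testBit p q (fun _ => 1) (fun j' hj' => by
        show (1:ℕ) < 2^p
        have : (2:ℕ)^1 ≤ 2^p := Nat.pow_le_pow_right (by norm_num) (by omega)
        omega) j r hjq hrp
    have hSb : (∑ j' ∈ Finset.range q, xs j' * 2^(j'*p)).testBit (j*p+r) = (xs j).testBit r := by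
      exact blocks_testBit p q xs (fun j' hj' => by
        have h1 := hxs j' hj'
        have : (2:ℕ)^1 ≤ 2^p := Nat.pow_le_pow_right (by norm_num) (by omega)
        omega) j r hjq hrp
    rw [hMb, hSb]
    by_cases hr0 : r = 0
    · subst hr0
      have hone : (1:ℕ).testBit 0 = true := by decide
      rw [hone, Bool.and_true]
      have hieq : j * p + 0 = j * c + j := by
        have : j * p = j * c + j := by rw [hpc]; ring
        omega
      have hAb : (x * ∑ j' ∈ Finset.range q, 2^(j'*c)).testBit (j*p+0) = x.testBit j := by
        rw [hA, hieq]
        exact blocks_testBit c q (fun _ => x) (fun _ _ => hxc) j j hjq (by omega)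
      rw [hAb, hx1]
      have := blocks_testBit 1 q xs (fun j' hj' => by have := hxs j' hj'; omega) j 0 hjq
        (by norm_num)
      simpa using this
    · have hone : (1:ℕ).testBit r = false := by
        apply Nat.testBit_lt_two_pow
        have : (2:ℕ)^1 ≤ 2^r := Nat.pow_le_pow_right (by norm_num) (by omega)
        omega
      have hxsb : (xs j).testBit r = false := by
        apply Nat.testBit_lt_two_pow
        have h1 := hxs j hjq
        have : (2:ℕ)^1 ≤ 2^r := Nat.pow_le_pow_right (by norm_num) (by omega)
        omega
      rw [hone, hxsb, Bool.and_false]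

lemma key (q l p b e a M : ℕ) (xs : ℕ → ℕ)
    (hq : 1 ≤ q)
    (hxs : ∀ i < q, xs i ≤ 1)
    (hmid : ∀ j t, j + t + 1 = q → j*p + t*b + e = a + j*l)
    (hlow : ∀ j t, j + t + 2 ≤ q → j*p + t*b + e ≤ M)
    (hhi : ∀ j t, t < q → q ≤ j + t → a + p ≤ j*p + t*b + e)
    (hM : q * q * 2^M < 2^a)
    (hmidlt : (∑ i ∈ Finset.range q, xs i * 2^(i*l)) < 2^p) :
    ((∑ j ∈ Finset.range q, xs j * 2^(j*p)) * (2^e * ∑ t ∈ Finset.range q, 2^(t*b))) / 2^a % 2^p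
      = ∑ i ∈ Finset.range q, xs i * 2^(i*l) := by
  set F : ℕ → ℕ → ℕ := fun j t => xs j * 2^(j*p + t*b + e) with hF
  have hP : (∑ j ∈ Finset.range q, xs j * 2^(j*p)) * (2^e * ∑ t ∈ Finset.range q, 2^(t*b))
      = ∑ j ∈ Finset.range q, ∑ t ∈ Finset.range q, F j t := by
    rw [Finset.sum_mul]
    refine Finset.sum_congr rfl fun j _ => ?_
    rw [Finset.mul_sum, Finset.mul_sum]
    refine Finset.sum_congr rfl fun t _ => ?_
    rw [hF]
    simp only []
    rw [pow_add, pow_add]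
    ring
  have hsplit : ∀ j ∈ Finset.range q, ∑ t ∈ Finset.range q, F j t
      = ((∑ t ∈ Finset.range (q-1-j), F j t) + F j (q-1-j))
        + ∑ t ∈ Finset.Ico (q-j) q, F j t := by
    intro j hj
    have hjq : j < q := Finset.mem_range.mp hj
    rw [← Finset.sum_range_add_sum_Ico (F j) (show q - j ≤ q from Nat.sub_le _ _)]
    congr 1
    rw [show q - j = (q-1-j)+1 from by omega, Finset.sum_range_succ]
  have hPsum : ∑ j ∈ Finset.range q, ∑ t ∈ Finset.range q, F j t
      = (∑ j ∈ Finset.range q, ∑ t ∈ Finset.range (q-1-j), F j t)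
        + (∑ j ∈ Finset.range q, F j (q-1-j))
        + ∑ j ∈ Finset.range q, ∑ t ∈ Finset.Ico (q-j) q, F j t := by
    rw [Finset.sum_congr rfl hsplit, Finset.sum_add_distrib, Finset.sum_add_distrib]
  have hMid : (∑ j ∈ Finset.range q, F j (q-1-j))
      = 2^a * ∑ i ∈ Finset.range q, xs i * 2^(i*l) := by
    rw [Finset.mul_sum]
    refine Finset.sum_congr rfl fun j hj => ?_
    have hjq : j < q := Finset.mem_range.mp hj
    rw [hF]
    simp only []
    rw [hmid j (q-1-j) (by omega), pow_add]
    ring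
  have hL : (∑ j ∈ Finset.range q, ∑ t ∈ Finset.range (q-1-j), F j t) < 2^a := by
    have hterm : ∀ j ∈ Finset.range q, (∑ t ∈ Finset.range (q-1-j), F j t) ≤ q * 2^M := by
      intro j hj
      have hjq : j < q := Finset.mem_range.mp hj
      calc (∑ t ∈ Finset.range (q-1-j), F j t) ≤ ∑ t ∈ Finset.range (q-1-j), 2^M := by
            refine Finset.sum_le_sum fun t ht => ?_
            have htq : t < q - 1 - j := Finset.mem_range.mp ht
            have h1 : xs j ≤ 1 := hxs j hjq
            have h2 : j*p + t*b + e ≤ M := hlow j t (by omega)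
            calc F j t ≤ 1 * 2^(j*p + t*b + e) := Nat.mul_le_mul_right _ h1
              _ ≤ 2^M := by rw [one_mul]; exact Nat.pow_le_pow_right (by norm_num) h2
        _ = (q-1-j) * 2^M := by rw [Finset.sum_const, Finset.card_range, smul_eq_mul]
        _ ≤ q * 2^M := Nat.mul_le_mul_right _ (by omega)
    calc (∑ j ∈ Finset.range q, ∑ t ∈ Finset.range (q-1-j), F j t)
        ≤ ∑ j ∈ Finset.range q, q * 2^M := Finset.sum_le_sum hterm
      _ = q * (q * 2^M) := by rw [Finset.sum_const, Finset.card_range, smul_eq_mul]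
      _ = q * q * 2^M := by ring
      _ < 2^a := hM
  have hHi : 2^(a+p) ∣ ∑ j ∈ Finset.range q, ∑ t ∈ Finset.Ico (q-j) q, F j t := by
    refine Finset.dvd_sum fun j hj => Finset.dvd_sum fun t ht => ?_
    have hjq : j < q := Finset.mem_range.mp hj
    obtain ⟨ht1, ht2⟩ := Finset.mem_Ico.mp ht
    have hE : a + p ≤ j*p + t*b + e := hhi j t ht2 (by omega)
    exact Dvd.dvd.mul_left (pow_dvd_pow 2 hE) _
  obtain ⟨H, hH⟩ := hHi
  rw [hP, hPsum, hMid, hH]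
  have hcomb : (∑ j ∈ Finset.range q, ∑ t ∈ Finset.range (q-1-j), F j t)
        + 2^a * (∑ i ∈ Finset.range q, xs i * 2^(i*l)) + 2^(a+p) * H
      = (∑ j ∈ Finset.range q, ∑ t ∈ Finset.range (q-1-j), F j t)
        + 2^a * ((∑ i ∈ Finset.range q, xs i * 2^(i*l)) + 2^p * H) := by
    rw [pow_add]; ring
  rw [hcomb, Nat.add_mul_div_left _ _ (by positivity : (0:ℕ) < 2^a),
    Nat.div_eq_of_lt hL, zero_add, Nat.add_mul_mod_self_left,
    Nat.mod_eq_of_lt hmidlt]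

lemma quot (l b n E : ℕ) (hb : 1 ≤ b) :
    (2^(E + l + n*b) - 2^(E + l)) / (2^(l+b) - 2^l)
      = 2^E * ∑ t ∈ Finset.range n, 2^(t*b) := by
  have hden : (2:ℕ)^(l+b) - 2^l = 2^l * (2^b - 1) := by
    rw [Nat.mul_sub, mul_one, pow_add]
  have hnum : (2:ℕ)^(E+l+n*b) - 2^(E+l) = 2^(E+l) * (2^(n*b) - 1) := by
    rw [Nat.mul_sub, mul_one, ← pow_add]
  have hpos : 0 < (2:ℕ)^l * (2^b - 1) := by
    have h1 : (2:ℕ)^1 ≤ 2^b := Nat.pow_le_pow_right (by norm_num) hb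
    have h2 : (0:ℕ) < 2^l := by positivity
    have : (0:ℕ) < 2^b - 1 := by omega
    positivity
  rw [hnum, hden, ← geom2 b n,
    show (2:ℕ)^(E+l) * ((2^b-1) * ∑ j ∈ Finset.range n, 2^(j*b))
      = (2^l * (2^b-1)) * (2^E * ∑ j ∈ Finset.range n, 2^(j*b)) from by rw [pow_add]; ring,
    Nat.mul_div_cancel_left _ hpos]

def rep (x n l : ℕ) : ℕ := x * ((2 ^ (n * l) - 1) / (2 ^ l - 1))

def incrx (x n l₁ l₂ : ℕ) : ℕ := rep x n (l₂ - l₁) &&& rep (2 ^ l₁ - 1) n l₂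

def rm (x y : ℕ) : ℕ := if y = 0 then 0 else x % y

def swap1 (x q k m : ℕ) : ℕ :=
  let p := q ^ 2 + q * (m + 1)
  let a := q * p * (k + 1)
  rm ((incrx x q 1 p *
      ((2 ^ (a + k * p) - 2 ^ ((a + k * p) - q * (k * p - m))) /
        (2 ^ (k * p) - 2 ^ m))) / 2 ^ a) (2 ^ p)

def incr (x q l : ℕ) : ℕ := swap1 x q 1 l

theorem incr_eq_sum (q l x : ℕ) (xs : ℕ → ℕ) (hq : 1 ≤ q) (hl : 1 ≤ l)
    (hxs : ∀ i < q, xs i ≤ 1)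
    (hx : x = ∑ i ∈ Finset.range q, xs i * 2 ^ i) :
    incr x q l = ∑ i ∈ Finset.range q, xs i * 2 ^ (i * l) := by
  subst hx
  obtain ⟨q', rfl⟩ : ∃ q', q = q' + 1 := ⟨q - 1, by omega⟩
  simp only [incr, swap1, incrx, rep, rm, one_mul, mul_one, pow_one]
  -- abbreviations (purely notational; we keep explicit polynomials)
  rw [if_neg (by positivity : ¬((2:ℕ) ^ ((q' + 1) ^ 2 + (q' + 1) * (l + 1)) = 0))]
  have hPe2 : 2 ≤ (q' + 1) ^ 2 + (q' + 1) * (l + 1) := by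
    have h1 : 1 ≤ (q' + 1) ^ 2 := Nat.one_le_pow _ _ (by omega)
    have h2 : 1 ≤ (q' + 1) * (l + 1) := Nat.one_le_iff_ne_zero.mpr (by positivity)
    linarith
  have hc1 : 1 ≤ (q' + 1) ^ 2 + (q' + 1) * (l + 1) - 1 := by omega
  have hc2 : 1 ≤ (q' + 1) ^ 2 + (q' + 1) * (l + 1) := by omega
  rw [rep_eq (∑ i ∈ Finset.range (q' + 1), xs i * 2 ^ i) (q' + 1)
      ((q' + 1) ^ 2 + (q' + 1) * (l + 1) - 1) hc1,
    rep_eq (2 - 1) (q' + 1) ((q' + 1) ^ 2 + (q' + 1) * (l + 1)) hc2,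
    show (2:ℕ) - 1 = 1 from rfl, one_mul]
  have hple : (q' + 1) + 1 ≤ (q' + 1) ^ 2 + (q' + 1) * (l + 1) := by
    have h1 : q' + 1 ≤ (q' + 1) ^ 2 := Nat.le_self_pow (by omega) _
    have h2 : 1 ≤ (q' + 1) * (l + 1) := Nat.one_le_iff_ne_zero.mpr (by positivity)
    linarith
  rw [and_mask (q' + 1) ((q' + 1) ^ 2 + (q' + 1) * (l + 1)) xs (by omega) hxs hple]
  -- the quotient
  have hB1 : 0 < q' * q' + 3 * q' + 2 + q' * l := by positivity
  have hPl : (q' + 1) ^ 2 + (q' + 1) * (l + 1) - l = q' * q' + 3 * q' + 2 + q' * l := by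
    rw [show (q' + 1) ^ 2 + (q' + 1) * (l + 1) = l + (q' * q' + 3 * q' + 2 + q' * l) from by ring]
    exact Nat.add_sub_cancel_left _ _
  have e1 : (q' + 1) * ((q' + 1) ^ 2 + (q' + 1) * (l + 1)) * (1 + 1)
        + ((q' + 1) ^ 2 + (q' + 1) * (l + 1))
      = (2 * (q' + 1) * l + (q' + 2) * (q' * q' + 3 * q' + 2 + q' * l)) + l
        + (q' + 1) * (q' * q' + 3 * q' + 2 + q' * l) := by ring
  have e2 : (q' + 1) * ((q' + 1) ^ 2 + (q' + 1) * (l + 1)) * (1 + 1)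
        + ((q' + 1) ^ 2 + (q' + 1) * (l + 1))
        - (q' + 1) * ((q' + 1) ^ 2 + (q' + 1) * (l + 1) - l)
      = (2 * (q' + 1) * l + (q' + 2) * (q' * q' + 3 * q' + 2 + q' * l)) + l := by
    rw [hPl, e1]
    exact Nat.add_sub_cancel _ _
  have hquot : (2 ^ ((q' + 1) * ((q' + 1) ^ 2 + (q' + 1) * (l + 1)) * (1 + 1)
          + ((q' + 1) ^ 2 + (q' + 1) * (l + 1)))
        - 2 ^ ((q' + 1) * ((q' + 1) ^ 2 + (q' + 1) * (l + 1)) * (1 + 1)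
          + ((q' + 1) ^ 2 + (q' + 1) * (l + 1))
          - (q' + 1) * ((q' + 1) ^ 2 + (q' + 1) * (l + 1) - l)))
        / (2 ^ ((q' + 1) ^ 2 + (q' + 1) * (l + 1)) - 2 ^ l)
      = 2 ^ (2 * (q' + 1) * l + (q' + 2) * (q' * q' + 3 * q' + 2 + q' * l))
        * ∑ t ∈ Finset.range (q' + 1), 2 ^ (t * (q' * q' + 3 * q' + 2 + q' * l)) := by
    rw [e2, e1, show (q' + 1) ^ 2 + (q' + 1) * (l + 1)
        = l + (q' * q' + 3 * q' + 2 + q' * l) from by ring]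
    exact quot l _ (q' + 1) _ hB1
  rw [hquot]
  -- apply the key lemma
  refine key (q' + 1) l ((q' + 1) ^ 2 + (q' + 1) * (l + 1))
    (q' * q' + 3 * q' + 2 + q' * l)
    (2 * (q' + 1) * l + (q' + 2) * (q' * q' + 3 * q' + 2 + q' * l))
    ((q' + 1) * ((q' + 1) ^ 2 + (q' + 1) * (l + 1)) * (1 + 1))
    ((2 * q' + 1) * ((q' + 1) ^ 2 + (q' + 1) * (l + 1)) + q' * l)
    xs (by omega) hxs ?_ ?_ ?_ ?_ ?_
  · -- hmid
    intro j t h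
    have hq'jt : q' = j + t := by omega
    subst hq'jt
    ring
  · -- hlow
    intro j t h
    obtain ⟨k, hk⟩ : ∃ k, q' = j + t + 1 + k := ⟨q' - (j + t + 1), by omega⟩
    subst hk
    have hD : (2 * (j + t + 1 + k) + 1)
          * (((j + t + 1 + k) + 1) ^ 2 + ((j + t + 1 + k) + 1) * (l + 1))
          + (j + t + 1 + k) * l
        = (j * (((j + t + 1 + k) + 1) ^ 2 + ((j + t + 1 + k) + 1) * (l + 1))
            + t * ((j + t + 1 + k) * (j + t + 1 + k) + 3 * (j + t + 1 + k) + 2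
              + (j + t + 1 + k) * l)
            + (2 * ((j + t + 1 + k) + 1) * l
              + ((j + t + 1 + k) + 2) * ((j + t + 1 + k) * (j + t + 1 + k)
                + 3 * (j + t + 1 + k) + 2 + (j + t + 1 + k) * l)))
          + (t * l + k * l
            + k * ((j + t + 1 + k) * (j + t + 1 + k) + 3 * (j + t + 1 + k) + 2
              + (j + t + 1 + k) * l)) := by ring
    rw [hD]
    exact Nat.le_add_right _ _
  · -- hhi
    intro j t ht hjt
    obtain ⟨u, hu⟩ : ∃ u, q' = t + u := ⟨q' - t, by omega⟩
    subst hu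
    obtain ⟨v, hv⟩ : ∃ v, j = u + v + 1 := ⟨j - u - 1, by omega⟩
    subst hv
    have hD : (u + v + 1) * (((t + u) + 1) ^ 2 + ((t + u) + 1) * (l + 1))
          + t * ((t + u) * (t + u) + 3 * (t + u) + 2 + (t + u) * l)
          + (2 * ((t + u) + 1) * l
            + ((t + u) + 2) * ((t + u) * (t + u) + 3 * (t + u) + 2 + (t + u) * l))
        = (((t + u) + 1) * (((t + u) + 1) ^ 2 + ((t + u) + 1) * (l + 1)) * (1 + 1)
            + (((t + u) + 1) ^ 2 + ((t + u) + 1) * (l + 1)))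
          + ((u + v) * l
            + v * ((t + u) * (t + u) + 3 * (t + u) + 2 + (t + u) * l)) := by ring
    rw [hD]
    exact Nat.le_add_right _ _
  · -- hM
    have ha' : (q' + 1) * ((q' + 1) ^ 2 + (q' + 1) * (l + 1)) * (1 + 1)
        = (l + q' * q' + 3 * q' + 2)
          + ((2 * q' + 1) * ((q' + 1) ^ 2 + (q' + 1) * (l + 1)) + q' * l) := by ring
    rw [ha']
    have h1 : (q' + 1) * (q' + 1) < 2 ^ ((q' + 1) * (q' + 1)) := Nat.lt_two_pow_self
    have h2 : (2:ℕ) ^ ((q' + 1) * (q' + 1)) ≤ 2 ^ (l + q' * q' + 3 * q' + 2) := by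
      apply Nat.pow_le_pow_right (by norm_num)
      have : (q' + 1) * (q' + 1) = q' * q' + 2 * q' + 1 := by ring
      linarith
    calc (q' + 1) * (q' + 1)
          * 2 ^ ((2 * q' + 1) * ((q' + 1) ^ 2 + (q' + 1) * (l + 1)) + q' * l)
        < 2 ^ (l + q' * q' + 3 * q' + 2)
          * 2 ^ ((2 * q' + 1) * ((q' + 1) ^ 2 + (q' + 1) * (l + 1)) + q' * l) := by
          exact Nat.mul_lt_mul_of_lt_of_le (lt_of_lt_of_le h1 h2) (le_refl _) (by positivity)
      _ = 2 ^ ((l + q' * q' + 3 * q' + 2)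
          + ((2 * q' + 1) * ((q' + 1) ^ 2 + (q' + 1) * (l + 1)) + q' * l)) := by
          rw [← pow_add]
  · -- hmidlt
    calc (∑ i ∈ Finset.range (q' + 1), xs i * 2 ^ (i * l))
        ≤ ∑ i ∈ Finset.range (q' + 1), 2 ^ (q' * l) := by
          refine Finset.sum_le_sum fun i hi => ?_
          have hiq : i < q' + 1 := Finset.mem_range.mp hi
          calc xs i * 2 ^ (i * l) ≤ 1 * 2 ^ (i * l) :=
                Nat.mul_le_mul_right _ (hxs i hiq)
            _ = 2 ^ (i * l) := one_mul _
            _ ≤ 2 ^ (q' * l) :=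
                Nat.pow_le_pow_right (by norm_num) (Nat.mul_le_mul_right _ (by omega))
      _ = (q' + 1) * 2 ^ (q' * l) := by
          rw [Finset.sum_const, Finset.card_range, smul_eq_mul]
      _ < 2 ^ (q' + 1) * 2 ^ (q' * l) :=
          Nat.mul_lt_mul_of_lt_of_le (Nat.lt_two_pow_self) (le_refl _) (by positivity)
      _ = 2 ^ ((q' + 1) + q' * l) := by rw [← pow_add]
      _ ≤ 2 ^ ((q' + 1) ^ 2 + (q' + 1) * (l + 1)) := by
          apply Nat.pow_le_pow_right (by norm_num)
          nlinarith [sq_nonneg (q' + 1)]
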